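/- Let 𝒟 ⊆ F_2^48 be the span of (1^16 0^32), (0^32 1^16), and all (a,a,a) with a ∈ RM(1,4); let 𝒞 = 𝒟^⊥; and let ξ = (110000001100000001100000011000001010000010100000) ∈ F_2^48. Then the subcode 𝒞_ξ = {β ∈ 𝒞 : supp(β) ⊆ supp(ξ)} is self-dual with respect to ξ; moreover ⟨β,ξ⟩ = 0 for every β ∈ 𝒞_ξ, so that 𝒞_ξ = {β ∈ 𝒞 : ⟨β,ξ⟩ = 0 and supp(β) ⊆ supp(ξ)}. -/

import Mathlib

/-- The weight of a binary vector: the number of nonzero coordinates. -/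
def wt {n : ℕ} (α : Fin n → ZMod 2) : ℕ :=
  (Finset.univ.filter (fun i => α i ≠ 0)).card

/-- The standard bilinear form `⟨α,β⟩ = ∑ i, α i * β i` on `F_2^n`. -/
def ip {n : ℕ} (α β : Fin n → ZMod 2) : ZMod 2 := ∑ i, α i * β i

/-- The support of a binary vector. -/
def supp {n : ℕ} (α : Fin n → ZMod 2) : Set (Fin n) := {i | α i ≠ 0}

/-- The dual code of a set of vectors. -/
def dualCode {n : ℕ} (S : Set (Fin n → ZMod 2)) : Set (Fin n → ZMod 2) :=
  {δ | ∀ γ ∈ S, ip δ γ = 0}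

/-- The five generators of the first-order Reed–Muller code RM(1,4). -/
def r0 : Fin 16 → ZMod 2 := fun _ => 1
def r1 : Fin 16 → ZMod 2 := fun i => if i.val < 8 then 1 else 0
def r2 : Fin 16 → ZMod 2 := fun i => if i.val % 8 < 4 then 1 else 0
def r3 : Fin 16 → ZMod 2 := fun i => if i.val % 4 < 2 then 1 else 0
def r4 : Fin 16 → ZMod 2 := fun i => if i.val % 2 = 0 then 1 else 0

/-- The first-order Reed–Muller code RM(1,4) ⊆ F_2^16. -/
def RM14 : Submodule (ZMod 2) (Fin 16 → ZMod 2) :=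
  Submodule.span (ZMod 2) {r0, r1, r2, r3, r4}

/-- The triple repetition `(a, a, a)` of a vector of length 16. -/
def tri (a : Fin 16 → ZMod 2) : Fin 48 → ZMod 2 :=
  fun i => a ⟨i.val % 16, Nat.mod_lt _ (by norm_num)⟩

/-- `(1^16 0^32)`. -/
def e1 : Fin 48 → ZMod 2 := fun i => if i.val < 16 then 1 else 0

/-- `(0^32 1^16)`. -/
def e2 : Fin 48 → ZMod 2 := fun i => if 32 ≤ i.val then 1 else 0

/-- The code 𝒟 ⊆ F_2^48, spanned by `(1^16 0^32)`, `(0^32 1^16)` and all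
`(a,a,a)` with `a ∈ RM(1,4)`. -/
def Dcode : Submodule (ZMod 2) (Fin 48 → ZMod 2) :=
  Submodule.span (ZMod 2) ({e1, e2} ∪ tri '' (RM14 : Set (Fin 16 → ZMod 2)))

/-- The `b`-th block of length 16 of a vector of length 48. -/
def blk (x : Fin 48 → ZMod 2) (b : Fin 3) : Fin 16 → ZMod 2 :=
  fun j => x ⟨16 * b.val + j.val, by have hb := b.isLt; have hj := j.isLt; omega⟩

/-- ξ = (1100 0000 1100 0000 | 0110 0000 0110 0000 | 1010 0000 1010 0000) ∈ F_2^48. -/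
def xiv : Fin 48 → ZMod 2 :=
  fun i => if i.val ∈ [0, 1, 8, 9, 17, 18, 25, 26, 32, 34, 40, 42] then 1 else 0

/-- The support of a code: the union of the supports of its codewords. -/
def codeSupp {n : ℕ} (S : Set (Fin n → ZMod 2)) : Set (Fin n) := ⋃ h ∈ S, supp h

/-- `H^{⊥_β}`: vectors with support inside `supp β` orthogonal to every element of `H`. -/
def perpWrt {n : ℕ} (β : Fin n → ZMod 2) (H : Set (Fin n → ZMod 2)) :
    Set (Fin n → ZMod 2) :=
  {δ | supp δ ⊆ supp β ∧ ∀ h ∈ H, ip δ h = 0}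

/-- `H` is self-dual with respect to `β` if `supp H = supp β` and `H^{⊥_β} = H`. -/
def selfDualWrt {n : ℕ} (β : Fin n → ZMod 2) (H : Set (Fin n → ZMod 2)) : Prop :=
  codeSupp H = supp β ∧ perpWrt β H = H


/-! ### Auxiliary machinery -/
set_option maxHeartbeats 2000000
set_option maxRecDepth 16000
set_option synthInstance.maxSize 4000
set_option synthInstance.maxHeartbeats 2000000

def Bv0 : Fin 48 → ZMod 2 := fun i => if i.val ∈ [0,9,25,26,34,40] then 1 else 0
def Bv1 : Fin 48 → ZMod 2 := fun i => if i.val ∈ [1,9,34,42] then 1 else 0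
def Bv2 : Fin 48 → ZMod 2 := fun i => if i.val ∈ [8,9,25,26,40,42] then 1 else 0
def Bv3 : Fin 48 → ZMod 2 := fun i => if i.val ∈ [17,25,34,42] then 1 else 0
def Bv4 : Fin 48 → ZMod 2 := fun i => if i.val ∈ [18,26,34,42] then 1 else 0
def Bv5 : Fin 48 → ZMod 2 := fun i => if i.val ∈ [32,34,40,42] then 1 else 0

def SF : Finset (Fin 48) := {0,1,8,9,17,18,25,26,32,34,40,42}

/-- `ip β ·` as a linear map. -/
def ipL (β : Fin 48 → ZMod 2) : (Fin 48 → ZMod 2) →ₗ[ZMod 2] ZMod 2 where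
  toFun γ := ip β γ
  map_add' x y := by simp [ip, mul_add, Finset.sum_add_distrib]
  map_smul' c x := by simp [ip, Finset.mul_sum, mul_left_comm]

/-- `tri` as a linear map. -/
def triL : (Fin 16 → ZMod 2) →ₗ[ZMod 2] (Fin 48 → ZMod 2) where
  toFun := tri
  map_add' x y := rfl
  map_smul' c x := rfl

lemma dual_iff (β : Fin 48 → ZMod 2) :
    β ∈ dualCode (Dcode : Set (Fin 48 → ZMod 2)) ↔
      (ip β e1 = 0 ∧ ip β e2 = 0 ∧ ip β (tri r0) = 0 ∧ ip β (tri r1) = 0 ∧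
       ip β (tri r2) = 0 ∧ ip β (tri r3) = 0 ∧ ip β (tri r4) = 0) := by
  have hr : ∀ r ∈ ({r0, r1, r2, r3, r4} : Set (Fin 16 → ZMod 2)), r ∈ RM14 :=
    fun r hr => Submodule.subset_span hr
  constructor
  · intro h
    refine ⟨h e1 (Submodule.subset_span (Or.inl (Or.inl rfl))),
      h e2 (Submodule.subset_span (Or.inl (Or.inr rfl))),
      h (tri r0) (Submodule.subset_span (Or.inr ⟨r0, hr r0 (by simp), rfl⟩)),
      h (tri r1) (Submodule.subset_span (Or.inr ⟨r1, hr r1 (by simp), rfl⟩)),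
      h (tri r2) (Submodule.subset_span (Or.inr ⟨r2, hr r2 (by simp), rfl⟩)),
      h (tri r3) (Submodule.subset_span (Or.inr ⟨r3, hr r3 (by simp), rfl⟩)),
      h (tri r4) (Submodule.subset_span (Or.inr ⟨r4, hr r4 (by simp), rfl⟩))⟩
  · rintro ⟨h1, h2, h3, h4, h5, h6, h7⟩ γ hγ
    have hker : Dcode ≤ LinearMap.ker (ipL β) := by
      rw [Dcode, Submodule.span_le]
      rintro γ' ((rfl | rfl) | ⟨a, ha, rfl⟩)
      · exact h1
      · exact h2
      · have hker2 : RM14 ≤ LinearMap.ker ((ipL β).comp triL) := by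
          rw [RM14, Submodule.span_le]
          rintro r (rfl | rfl | rfl | rfl | rfl)
          · exact h3
          · exact h4
          · exact h5
          · exact h6
          · exact h7
        exact hker2 ha
    have hm := hker hγ
    rw [LinearMap.mem_ker] at hm
    exact hm

lemma ip_twelve (β g : Fin 48 → ZMod 2) (hz : ∀ i, i ∉ SF → β i = 0) :
    ip β g = β 0 * g 0 + β 1 * g 1 + β 8 * g 8 + β 9 * g 9 + β 17 * g 17 + β 18 * g 18
      + β 25 * g 25 + β 26 * g 26 + β 32 * g 32 + β 34 * g 34 + β 40 * g 40 + β 42 * g 42 := by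
  have h : ip β g = ∑ i ∈ SF, β i * g i := by
    refine (Finset.sum_subset (Finset.subset_univ _) ?_).symm
    intro i _ hi
    rw [hz i hi, zero_mul]
  rw [h]
  simp (config := { decide := true }) [SF, Finset.sum_insert]
  ring

lemma hz_of_supp (β : Fin 48 → ZMod 2) (h : supp β ⊆ supp xiv) :
    ∀ i, i ∉ SF → β i = 0 := by
  intro i hi
  by_contra hne
  have h1 : i ∈ supp xiv := h hne
  have h2 : ∀ j : Fin 48, j ∉ SF → ¬ (xiv j ≠ 0) := by decide
  exact h2 i hi h1

lemma Lsol : ∀ a b c d e f g h i j k l : ZMod 2,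
    a+b+c+d = 0 → i+j+k+l = 0 → a+b+c+d+e+f+g+h+i+j+k+l = 0 → a+b+e+f+i+j = 0 →
    a+b+c+d+e+g+i+k = 0 → a+c+f+h+i+j+k+l = 0 →
    (a+d+g+h+j+k = 0 ∧ b+d+j+l = 0 ∧ c+d+g+h+k+l = 0 ∧ e+g+j+l = 0 ∧ f+h+j+l = 0 ∧
     i+j+k+l = 0 ∧
     d = a+b+c ∧ g = a+c+e ∧ h = a+c+f ∧ j = a+b+e+f+i ∧ k = a+c+i ∧ l = b+c+e+f+i) := by
  decide

lemma LB : ∀ a b c d e f g h i j k l : ZMod 2,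
    a+d+g+h+j+k = 0 → b+d+j+l = 0 → c+d+g+h+k+l = 0 → e+g+j+l = 0 → f+h+j+l = 0 →
    i+j+k+l = 0 →
    (a+b+c+d = 0 ∧ i+j+k+l = 0 ∧ a+b+c+d+e+f+g+h+i+j+k+l = 0 ∧ a+b+e+f+i+j = 0 ∧
     a+b+c+d+e+f+g+h+i+j+k+l = 0 ∧ a+b+c+d+e+g+i+k = 0 ∧ a+c+f+h+i+j+k+l = 0) := by
  decide

lemma ipE1 (β : Fin 48 → ZMod 2) (hz : ∀ i, i ∉ SF → β i = 0) :
    ip β e1 = β 0 + β 1 + β 8 + β 9 := by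
  rw [ip_twelve β e1 hz]
  simp only [show e1 (0 : Fin 48) = (1:ZMod 2) from by decide, show e1 (1 : Fin 48) = (1:ZMod 2) from by decide, show e1 (8 : Fin 48) = (1:ZMod 2) from by decide, show e1 (9 : Fin 48) = (1:ZMod 2) from by decide, show e1 (17 : Fin 48) = (0:ZMod 2) from by decide, show e1 (18 : Fin 48) = (0:ZMod 2) from by decide, show e1 (25 : Fin 48) = (0:ZMod 2) from by decide, show e1 (26 : Fin 48) = (0:ZMod 2) from by decide, show e1 (32 : Fin 48) = (0:ZMod 2) from by decide, show e1 (34 : Fin 48) = (0:ZMod 2) from by decide, show e1 (40 : Fin 48) = (0:ZMod 2) from by decide, show e1 (42 : Fin 48) = (0:ZMod 2) from by decide, mul_one, mul_zero, add_zero, zero_add]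

lemma ipE2 (β : Fin 48 → ZMod 2) (hz : ∀ i, i ∉ SF → β i = 0) :
    ip β e2 = β 32 + β 34 + β 40 + β 42 := by
  rw [ip_twelve β e2 hz]
  simp only [show e2 (0 : Fin 48) = (0:ZMod 2) from by decide, show e2 (1 : Fin 48) = (0:ZMod 2) from by decide, show e2 (8 : Fin 48) = (0:ZMod 2) from by decide, show e2 (9 : Fin 48) = (0:ZMod 2) from by decide, show e2 (17 : Fin 48) = (0:ZMod 2) from by decide, show e2 (18 : Fin 48) = (0:ZMod 2) from by decide, show e2 (25 : Fin 48) = (0:ZMod 2) from by decide, show e2 (26 : Fin 48) = (0:ZMod 2) from by decide, show e2 (32 : Fin 48) = (1:ZMod 2) from by decide, show e2 (34 : Fin 48) = (1:ZMod 2) from by decide, show e2 (40 : Fin 48) = (1:ZMod 2) from by decide, show e2 (42 : Fin 48) = (1:ZMod 2) from by decide, mul_one, mul_zero, add_zero, zero_add]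

lemma ipT0 (β : Fin 48 → ZMod 2) (hz : ∀ i, i ∉ SF → β i = 0) :
    ip β (tri r0) = β 0 + β 1 + β 8 + β 9 + β 17 + β 18 + β 25 + β 26 + β 32 + β 34 + β 40 + β 42 := by
  rw [ip_twelve β (tri r0) hz]
  simp only [show (tri r0) (0 : Fin 48) = (1:ZMod 2) from by decide, show (tri r0) (1 : Fin 48) = (1:ZMod 2) from by decide, show (tri r0) (8 : Fin 48) = (1:ZMod 2) from by decide, show (tri r0) (9 : Fin 48) = (1:ZMod 2) from by decide, show (tri r0) (17 : Fin 48) = (1:ZMod 2) from by decide, show (tri r0) (18 : Fin 48) = (1:ZMod 2) from by decide, show (tri r0) (25 : Fin 48) = (1:ZMod 2) from by decide, show (tri r0) (26 : Fin 48) = (1:ZMod 2) from by decide, show (tri r0) (32 : Fin 48) = (1:ZMod 2) from by decide, show (tri r0) (34 : Fin 48) = (1:ZMod 2) from by decide, show (tri r0) (40 : Fin 48) = (1:ZMod 2) from by decide, show (tri r0) (42 : Fin 48) = (1:ZMod 2) from by decide, mul_one, mul_zero, add_zero, zero_add]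

lemma ipT1 (β : Fin 48 → ZMod 2) (hz : ∀ i, i ∉ SF → β i = 0) :
    ip β (tri r1) = β 0 + β 1 + β 17 + β 18 + β 32 + β 34 := by
  rw [ip_twelve β (tri r1) hz]
  simp only [show (tri r1) (0 : Fin 48) = (1:ZMod 2) from by decide, show (tri r1) (1 : Fin 48) = (1:ZMod 2) from by decide, show (tri r1) (8 : Fin 48) = (0:ZMod 2) from by decide, show (tri r1) (9 : Fin 48) = (0:ZMod 2) from by decide, show (tri r1) (17 : Fin 48) = (1:ZMod 2) from by decide, show (tri r1) (18 : Fin 48) = (1:ZMod 2) from by decide, show (tri r1) (25 : Fin 48) = (0:ZMod 2) from by decide, show (tri r1) (26 : Fin 48) = (0:ZMod 2) from by decide, show (tri r1) (32 : Fin 48) = (1:ZMod 2) from by decide, show (tri r1) (34 : Fin 48) = (1:ZMod 2) from by decide, show (tri r1) (40 : Fin 48) = (0:ZMod 2) from by decide, show (tri r1) (42 : Fin 48) = (0:ZMod 2) from by decide, mul_one, mul_zero, add_zero, zero_add]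

lemma ipT2 (β : Fin 48 → ZMod 2) (hz : ∀ i, i ∉ SF → β i = 0) :
    ip β (tri r2) = β 0 + β 1 + β 8 + β 9 + β 17 + β 18 + β 25 + β 26 + β 32 + β 34 + β 40 + β 42 := by
  rw [ip_twelve β (tri r2) hz]
  simp only [show (tri r2) (0 : Fin 48) = (1:ZMod 2) from by decide, show (tri r2) (1 : Fin 48) = (1:ZMod 2) from by decide, show (tri r2) (8 : Fin 48) = (1:ZMod 2) from by decide, show (tri r2) (9 : Fin 48) = (1:ZMod 2) from by decide, show (tri r2) (17 : Fin 48) = (1:ZMod 2) from by decide, show (tri r2) (18 : Fin 48) = (1:ZMod 2) from by decide, show (tri r2) (25 : Fin 48) = (1:ZMod 2) from by decide, show (tri r2) (26 : Fin 48) = (1:ZMod 2) from by decide, show (tri r2) (32 : Fin 48) = (1:ZMod 2) from by decide, show (tri r2) (34 : Fin 48) = (1:ZMod 2) from by decide, show (tri r2) (40 : Fin 48) = (1:ZMod 2) from by decide, show (tri r2) (42 : Fin 48) = (1:ZMod 2) from by decide, mul_one, mul_zero, add_zero, zero_add]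

lemma ipT3 (β : Fin 48 → ZMod 2) (hz : ∀ i, i ∉ SF → β i = 0) :
    ip β (tri r3) = β 0 + β 1 + β 8 + β 9 + β 17 + β 25 + β 32 + β 40 := by
  rw [ip_twelve β (tri r3) hz]
  simp only [show (tri r3) (0 : Fin 48) = (1:ZMod 2) from by decide, show (tri r3) (1 : Fin 48) = (1:ZMod 2) from by decide, show (tri r3) (8 : Fin 48) = (1:ZMod 2) from by decide, show (tri r3) (9 : Fin 48) = (1:ZMod 2) from by decide, show (tri r3) (17 : Fin 48) = (1:ZMod 2) from by decide, show (tri r3) (18 : Fin 48) = (0:ZMod 2) from by decide, show (tri r3) (25 : Fin 48) = (1:ZMod 2) from by decide, show (tri r3) (26 : Fin 48) = (0:ZMod 2) from by decide, show (tri r3) (32 : Fin 48) = (1:ZMod 2) from by decide, show (tri r3) (34 : Fin 48) = (0:ZMod 2) from by decide, show (tri r3) (40 : Fin 48) = (1:ZMod 2) from by decide, show (tri r3) (42 : Fin 48) = (0:ZMod 2) from by decide, mul_one, mul_zero, add_zero, zero_add]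

lemma ipT4 (β : Fin 48 → ZMod 2) (hz : ∀ i, i ∉ SF → β i = 0) :
    ip β (tri r4) = β 0 + β 8 + β 18 + β 26 + β 32 + β 34 + β 40 + β 42 := by
  rw [ip_twelve β (tri r4) hz]
  simp only [show (tri r4) (0 : Fin 48) = (1:ZMod 2) from by decide, show (tri r4) (1 : Fin 48) = (0:ZMod 2) from by decide, show (tri r4) (8 : Fin 48) = (1:ZMod 2) from by decide, show (tri r4) (9 : Fin 48) = (0:ZMod 2) from by decide, show (tri r4) (17 : Fin 48) = (0:ZMod 2) from by decide, show (tri r4) (18 : Fin 48) = (1:ZMod 2) from by decide, show (tri r4) (25 : Fin 48) = (0:ZMod 2) from by decide, show (tri r4) (26 : Fin 48) = (1:ZMod 2) from by decide, show (tri r4) (32 : Fin 48) = (1:ZMod 2) from by decide, show (tri r4) (34 : Fin 48) = (1:ZMod 2) from by decide, show (tri r4) (40 : Fin 48) = (1:ZMod 2) from by decide, show (tri r4) (42 : Fin 48) = (1:ZMod 2) from by decide, mul_one, mul_zero, add_zero, zero_add]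

lemma ipXiv (β : Fin 48 → ZMod 2) (hz : ∀ i, i ∉ SF → β i = 0) :
    ip β xiv = β 0 + β 1 + β 8 + β 9 + β 17 + β 18 + β 25 + β 26 + β 32 + β 34 + β 40 + β 42 := by
  rw [ip_twelve β xiv hz]
  simp only [show xiv (0 : Fin 48) = (1:ZMod 2) from by decide, show xiv (1 : Fin 48) = (1:ZMod 2) from by decide, show xiv (8 : Fin 48) = (1:ZMod 2) from by decide, show xiv (9 : Fin 48) = (1:ZMod 2) from by decide, show xiv (17 : Fin 48) = (1:ZMod 2) from by decide, show xiv (18 : Fin 48) = (1:ZMod 2) from by decide, show xiv (25 : Fin 48) = (1:ZMod 2) from by decide, show xiv (26 : Fin 48) = (1:ZMod 2) from by decide, show xiv (32 : Fin 48) = (1:ZMod 2) from by decide, show xiv (34 : Fin 48) = (1:ZMod 2) from by decide, show xiv (40 : Fin 48) = (1:ZMod 2) from by decide, show xiv (42 : Fin 48) = (1:ZMod 2) from by decide, mul_one, mul_zero, add_zero, zero_add]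

lemma ipB0 (β : Fin 48 → ZMod 2) (hz : ∀ i, i ∉ SF → β i = 0) :
    ip β Bv0 = β 0 + β 9 + β 25 + β 26 + β 34 + β 40 := by
  rw [ip_twelve β Bv0 hz]
  simp only [show Bv0 (0 : Fin 48) = (1:ZMod 2) from by decide, show Bv0 (1 : Fin 48) = (0:ZMod 2) from by decide, show Bv0 (8 : Fin 48) = (0:ZMod 2) from by decide, show Bv0 (9 : Fin 48) = (1:ZMod 2) from by decide, show Bv0 (17 : Fin 48) = (0:ZMod 2) from by decide, show Bv0 (18 : Fin 48) = (0:ZMod 2) from by decide, show Bv0 (25 : Fin 48) = (1:ZMod 2) from by decide, show Bv0 (26 : Fin 48) = (1:ZMod 2) from by decide, show Bv0 (32 : Fin 48) = (0:ZMod 2) from by decide, show Bv0 (34 : Fin 48) = (1:ZMod 2) from by decide, show Bv0 (40 : Fin 48) = (1:ZMod 2) from by decide, show Bv0 (42 : Fin 48) = (0:ZMod 2) from by decide, mul_one, mul_zero, add_zero, zero_add]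

lemma ipB1 (β : Fin 48 → ZMod 2) (hz : ∀ i, i ∉ SF → β i = 0) :
    ip β Bv1 = β 1 + β 9 + β 34 + β 42 := by
  rw [ip_twelve β Bv1 hz]
  simp only [show Bv1 (0 : Fin 48) = (0:ZMod 2) from by decide, show Bv1 (1 : Fin 48) = (1:ZMod 2) from by decide, show Bv1 (8 : Fin 48) = (0:ZMod 2) from by decide, show Bv1 (9 : Fin 48) = (1:ZMod 2) from by decide, show Bv1 (17 : Fin 48) = (0:ZMod 2) from by decide, show Bv1 (18 : Fin 48) = (0:ZMod 2) from by decide, show Bv1 (25 : Fin 48) = (0:ZMod 2) from by decide, show Bv1 (26 : Fin 48) = (0:ZMod 2) from by decide, show Bv1 (32 : Fin 48) = (0:ZMod 2) from by decide, show Bv1 (34 : Fin 48) = (1:ZMod 2) from by decide, show Bv1 (40 : Fin 48) = (0:ZMod 2) from by decide, show Bv1 (42 : Fin 48) = (1:ZMod 2) from by decide, mul_one, mul_zero, add_zero, zero_add]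

lemma ipB2 (β : Fin 48 → ZMod 2) (hz : ∀ i, i ∉ SF → β i = 0) :
    ip β Bv2 = β 8 + β 9 + β 25 + β 26 + β 40 + β 42 := by
  rw [ip_twelve β Bv2 hz]
  simp only [show Bv2 (0 : Fin 48) = (0:ZMod 2) from by decide, show Bv2 (1 : Fin 48) = (0:ZMod 2) from by decide, show Bv2 (8 : Fin 48) = (1:ZMod 2) from by decide, show Bv2 (9 : Fin 48) = (1:ZMod 2) from by decide, show Bv2 (17 : Fin 48) = (0:ZMod 2) from by decide, show Bv2 (18 : Fin 48) = (0:ZMod 2) from by decide, show Bv2 (25 : Fin 48) = (1:ZMod 2) from by decide, show Bv2 (26 : Fin 48) = (1:ZMod 2) from by decide, show Bv2 (32 : Fin 48) = (0:ZMod 2) from by decide, show Bv2 (34 : Fin 48) = (0:ZMod 2) from by decide, show Bv2 (40 : Fin 48) = (1:ZMod 2) from by decide, show Bv2 (42 : Fin 48) = (1:ZMod 2) from by decide, mul_one, mul_zero, add_zero, zero_add]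

lemma ipB3 (β : Fin 48 → ZMod 2) (hz : ∀ i, i ∉ SF → β i = 0) :
    ip β Bv3 = β 17 + β 25 + β 34 + β 42 := by
  rw [ip_twelve β Bv3 hz]
  simp only [show Bv3 (0 : Fin 48) = (0:ZMod 2) from by decide, show Bv3 (1 : Fin 48) = (0:ZMod 2) from by decide, show Bv3 (8 : Fin 48) = (0:ZMod 2) from by decide, show Bv3 (9 : Fin 48) = (0:ZMod 2) from by decide, show Bv3 (17 : Fin 48) = (1:ZMod 2) from by decide, show Bv3 (18 : Fin 48) = (0:ZMod 2) from by decide, show Bv3 (25 : Fin 48) = (1:ZMod 2) from by decide, show Bv3 (26 : Fin 48) = (0:ZMod 2) from by decide, show Bv3 (32 : Fin 48) = (0:ZMod 2) from by decide, show Bv3 (34 : Fin 48) = (1:ZMod 2) from by decide, show Bv3 (40 : Fin 48) = (0:ZMod 2) from by decide, show Bv3 (42 : Fin 48) = (1:ZMod 2) from by decide, mul_one, mul_zero, add_zero, zero_add]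

lemma ipB4 (β : Fin 48 → ZMod 2) (hz : ∀ i, i ∉ SF → β i = 0) :
    ip β Bv4 = β 18 + β 26 + β 34 + β 42 := by
  rw [ip_twelve β Bv4 hz]
  simp only [show Bv4 (0 : Fin 48) = (0:ZMod 2) from by decide, show Bv4 (1 : Fin 48) = (0:ZMod 2) from by decide, show Bv4 (8 : Fin 48) = (0:ZMod 2) from by decide, show Bv4 (9 : Fin 48) = (0:ZMod 2) from by decide, show Bv4 (17 : Fin 48) = (0:ZMod 2) from by decide, show Bv4 (18 : Fin 48) = (1:ZMod 2) from by decide, show Bv4 (25 : Fin 48) = (0:ZMod 2) from by decide, show Bv4 (26 : Fin 48) = (1:ZMod 2) from by decide, show Bv4 (32 : Fin 48) = (0:ZMod 2) from by decide, show Bv4 (34 : Fin 48) = (1:ZMod 2) from by decide, show Bv4 (40 : Fin 48) = (0:ZMod 2) from by decide, show Bv4 (42 : Fin 48) = (1:ZMod 2) from by decide, mul_one, mul_zero, add_zero, zero_add]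

lemma ipB5 (β : Fin 48 → ZMod 2) (hz : ∀ i, i ∉ SF → β i = 0) :
    ip β Bv5 = β 32 + β 34 + β 40 + β 42 := by
  rw [ip_twelve β Bv5 hz]
  simp only [show Bv5 (0 : Fin 48) = (0:ZMod 2) from by decide, show Bv5 (1 : Fin 48) = (0:ZMod 2) from by decide, show Bv5 (8 : Fin 48) = (0:ZMod 2) from by decide, show Bv5 (9 : Fin 48) = (0:ZMod 2) from by decide, show Bv5 (17 : Fin 48) = (0:ZMod 2) from by decide, show Bv5 (18 : Fin 48) = (0:ZMod 2) from by decide, show Bv5 (25 : Fin 48) = (0:ZMod 2) from by decide, show Bv5 (26 : Fin 48) = (0:ZMod 2) from by decide, show Bv5 (32 : Fin 48) = (1:ZMod 2) from by decide, show Bv5 (34 : Fin 48) = (1:ZMod 2) from by decide, show Bv5 (40 : Fin 48) = (1:ZMod 2) from by decide, show Bv5 (42 : Fin 48) = (1:ZMod 2) from by decide, mul_one, mul_zero, add_zero, zero_add]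

lemma Bmem0 : Bv0 ∈ {β | β ∈ dualCode (Dcode : Set (Fin 48 → ZMod 2)) ∧ supp β ⊆ supp xiv} :=
  ⟨(dual_iff Bv0).mpr ⟨by decide, by decide, by decide, by decide, by decide, by decide, by decide⟩,
   fun {i} hi => (by decide : ∀ j : Fin 48, Bv0 j ≠ 0 → xiv j ≠ 0) i hi⟩
lemma Bmem1 : Bv1 ∈ {β | β ∈ dualCode (Dcode : Set (Fin 48 → ZMod 2)) ∧ supp β ⊆ supp xiv} :=
  ⟨(dual_iff Bv1).mpr ⟨by decide, by decide, by decide, by decide, by decide, by decide, by decide⟩,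
   fun {i} hi => (by decide : ∀ j : Fin 48, Bv1 j ≠ 0 → xiv j ≠ 0) i hi⟩
lemma Bmem2 : Bv2 ∈ {β | β ∈ dualCode (Dcode : Set (Fin 48 → ZMod 2)) ∧ supp β ⊆ supp xiv} :=
  ⟨(dual_iff Bv2).mpr ⟨by decide, by decide, by decide, by decide, by decide, by decide, by decide⟩,
   fun {i} hi => (by decide : ∀ j : Fin 48, Bv2 j ≠ 0 → xiv j ≠ 0) i hi⟩
lemma Bmem3 : Bv3 ∈ {β | β ∈ dualCode (Dcode : Set (Fin 48 → ZMod 2)) ∧ supp β ⊆ supp xiv} :=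
  ⟨(dual_iff Bv3).mpr ⟨by decide, by decide, by decide, by decide, by decide, by decide, by decide⟩,
   fun {i} hi => (by decide : ∀ j : Fin 48, Bv3 j ≠ 0 → xiv j ≠ 0) i hi⟩
lemma Bmem4 : Bv4 ∈ {β | β ∈ dualCode (Dcode : Set (Fin 48 → ZMod 2)) ∧ supp β ⊆ supp xiv} :=
  ⟨(dual_iff Bv4).mpr ⟨by decide, by decide, by decide, by decide, by decide, by decide, by decide⟩,
   fun {i} hi => (by decide : ∀ j : Fin 48, Bv4 j ≠ 0 → xiv j ≠ 0) i hi⟩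
lemma Bmem5 : Bv5 ∈ {β | β ∈ dualCode (Dcode : Set (Fin 48 → ZMod 2)) ∧ supp β ⊆ supp xiv} :=
  ⟨(dual_iff Bv5).mpr ⟨by decide, by decide, by decide, by decide, by decide, by decide, by decide⟩,
   fun {i} hi => (by decide : ∀ j : Fin 48, Bv5 j ≠ 0 → xiv j ≠ 0) i hi⟩

/-- Every element of the subcode pairs to zero with `xiv`. -/
lemma ip_xiv_zero : ∀ β ∈ dualCode (Dcode : Set (Fin 48 → ZMod 2)),
    supp β ⊆ supp xiv → ip β xiv = 0 := by
  intro β hd hs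
  have hz := hz_of_supp β hs
  have h3 := ((dual_iff β).mp hd).2.2.1
  rw [ipT0 β hz] at h3
  rw [ipXiv β hz]
  exact h3

theorem stmt17 :
    selfDualWrt xiv
      {β | β ∈ dualCode (Dcode : Set (Fin 48 → ZMod 2)) ∧ supp β ⊆ supp xiv} ∧
    (∀ β ∈ dualCode (Dcode : Set (Fin 48 → ZMod 2)),
      supp β ⊆ supp xiv → ip β xiv = 0) ∧
    {β | β ∈ dualCode (Dcode : Set (Fin 48 → ZMod 2)) ∧ supp β ⊆ supp xiv} =
      {β | β ∈ dualCode (Dcode : Set (Fin 48 → ZMod 2)) ∧ ip β xiv = 0 ∧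
        supp β ⊆ supp xiv} := by
  refine ⟨⟨?_, ?_⟩, ip_xiv_zero, ?_⟩
  · -- codeSupp H = supp xiv
    apply Set.Subset.antisymm
    · intro i hi
      rcases Set.mem_iUnion₂.mp hi with ⟨h, hmem, hih⟩
      exact hmem.2 hih
    · intro i hi
      have hcover : ∀ j : Fin 48, xiv j ≠ 0 →
          (Bv0 j ≠ 0 ∨ Bv1 j ≠ 0 ∨ Bv2 j ≠ 0 ∨ Bv3 j ≠ 0 ∨ Bv4 j ≠ 0 ∨ Bv5 j ≠ 0) := by
        decide
      rcases hcover i hi with h|h|h|h|h|h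
      exacts [Set.mem_iUnion₂.mpr ⟨Bv0, Bmem0, h⟩, Set.mem_iUnion₂.mpr ⟨Bv1, Bmem1, h⟩,
        Set.mem_iUnion₂.mpr ⟨Bv2, Bmem2, h⟩, Set.mem_iUnion₂.mpr ⟨Bv3, Bmem3, h⟩,
        Set.mem_iUnion₂.mpr ⟨Bv4, Bmem4, h⟩, Set.mem_iUnion₂.mpr ⟨Bv5, Bmem5, h⟩]
  · -- perpWrt xiv H = H
    apply Set.Subset.antisymm
    · rintro δ ⟨hs, ho⟩
      have hz := hz_of_supp δ hs
      have h0 := ho Bv0 Bmem0; rw [ipB0 δ hz] at h0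
      have h1 := ho Bv1 Bmem1; rw [ipB1 δ hz] at h1
      have h2 := ho Bv2 Bmem2; rw [ipB2 δ hz] at h2
      have h3 := ho Bv3 Bmem3; rw [ipB3 δ hz] at h3
      have h4 := ho Bv4 Bmem4; rw [ipB4 δ hz] at h4
      have h5 := ho Bv5 Bmem5; rw [ipB5 δ hz] at h5
      obtain ⟨g1, g2, g3, g4, g5, g6, g7⟩ :=
        LB _ _ _ _ _ _ _ _ _ _ _ _ h0 h1 h2 h3 h4 h5
      refine ⟨(dual_iff δ).mpr ⟨?_, ?_, ?_, ?_, ?_, ?_, ?_⟩, hs⟩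
      · rw [ipE1 δ hz]; exact g1
      · rw [ipE2 δ hz]; exact g2
      · rw [ipT0 δ hz]; exact g3
      · rw [ipT1 δ hz]; exact g4
      · rw [ipT2 δ hz]; exact g5
      · rw [ipT3 δ hz]; exact g6
      · rw [ipT4 δ hz]; exact g7
    · rintro δ ⟨hd, hs⟩
      refine ⟨hs, ?_⟩
      rintro h' ⟨hd', hs'⟩
      have hz := hz_of_supp δ hs
      have hz' := hz_of_supp h' hs'
      obtain ⟨d1, d2, d3, d4, d5, d6, d7⟩ := (dual_iff δ).mp hd
      rw [ipE1 δ hz] at d1; rw [ipE2 δ hz] at d2; rw [ipT0 δ hz] at d3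
      rw [ipT1 δ hz] at d4; rw [ipT3 δ hz] at d6; rw [ipT4 δ hz] at d7
      obtain ⟨-, -, -, -, -, -, e9, e25, e26, e34, e40, e42⟩ :=
        Lsol _ _ _ _ _ _ _ _ _ _ _ _ d1 d2 d3 d4 d6 d7
      obtain ⟨c1, c2, c3, c4, c5, c6, c7⟩ := (dual_iff h').mp hd'
      rw [ipE1 h' hz'] at c1; rw [ipE2 h' hz'] at c2; rw [ipT0 h' hz'] at c3
      rw [ipT1 h' hz'] at c4; rw [ipT3 h' hz'] at c6; rw [ipT4 h' hz'] at c7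
      obtain ⟨b0, b1, b2, b3, b4, b5, -, -, -, -, -, -⟩ :=
        Lsol _ _ _ _ _ _ _ _ _ _ _ _ c1 c2 c3 c4 c6 c7
      rw [ip_twelve δ h' hz, e9, e25, e26, e34, e40, e42]
      linear_combination (δ 0) * b0 + (δ 1) * b1 + (δ 8) * b2 + (δ 17) * b3 +
        (δ 18) * b4 + (δ 32) * b5
  · ext β
    simp only [Set.mem_setOf_eq]
    constructor
    · rintro ⟨h1, h2⟩
      exact ⟨h1, ip_xiv_zero β h1 h2, h2⟩
    · rintro ⟨h1, -, h3⟩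
      exact ⟨h1, h3⟩
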